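/- Let E be a real Banach space, T : E → E a continuous linear map, and suppose E = F ⊕ G where F and G are closed subspaces with continuous projections π_F, π_G (π_F + π_G = id, π_F with range F and kernel G, π_G with range G and kernel F), such that T(F) ⊆ F, T(G) ⊆ G, the restriction T|_G : G → G is bijective, and there exist constants D > 0 and λ ∈ (0,1) with ‖T^n(v)‖ ≤ D·λ^n·‖v‖ for all v ∈ F and n ≥ 0, and ‖(T|_G)^{-n}(v)‖ ≤ D·λ^n·‖v‖ for all v ∈ G and n ≥ 0. Then the operator J : E → E defined by J(v) := −Σ_{n≥0} T^n(π_F(v)) + Σ_{n≥1} (T|_G)^{-n}(π_G(v)) is a well-defined continuous linear map satisfying (T − id) ∘ J = id and J ∘ (T − id) = id; in particular T − id is a continuous linear equivalence, and ‖J‖ ≤ 2·C·D/(1−λ) where C := max(‖π_F‖, ‖π_G‖). -/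

import Mathlib

set_option maxHeartbeats 1000000


/-- Let `E` be a real Banach space, `T : E → E` continuous linear, and
`E = F ⊕ G` a splitting into closed subspaces with continuous projections `πF, πG`
(`πF + πG = id`, with the indicated ranges and kernels), such that `T` preserves `F` and
`G`, the restriction `T|_G` (given as `TG`, with inverse `S`) is bijective, and
`‖Tⁿ v‖ ≤ D λⁿ ‖v‖` on `F`, `‖(T|_G)⁻ⁿ v‖ ≤ D λⁿ ‖v‖` on `G`.  Then
`J v := − Σ_{n ≥ 0} Tⁿ(πF v) + Σ_{n ≥ 1} (T|_G)⁻ⁿ(πG v)` is a well-defined continuous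
linear map, a two-sided inverse of `T − id` (so `T − id` is a continuous linear
equivalence), and `‖J‖ ≤ 2 C D / (1 − λ)` with `C = max(‖πF‖, ‖πG‖)`. -/
theorem right_inverse_of_hyperbolic_minus_id
    {E : Type*} [NormedAddCommGroup E] [NormedSpace ℝ E] [CompleteSpace E]
    (T : E →L[ℝ] E) (F G : Submodule ℝ E)
    (hFc : IsClosed (F : Set E)) (hGc : IsClosed (G : Set E))
    (πF πG : E →L[ℝ] E)
    (hsum : πF + πG = ContinuousLinearMap.id ℝ E)
    (hπFr : Set.range πF = (F : Set E)) (hπFk : {v : E | πF v = 0} = (G : Set E))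
    (hπGr : Set.range πG = (G : Set E)) (hπGk : {v : E | πG v = 0} = (F : Set E))
    (hπGmem : ∀ v : E, πG v ∈ G)
    (hTF : ∀ v ∈ F, T v ∈ F)
    (hTG : ∀ v ∈ G, T v ∈ G)
    (TG : G →L[ℝ] G) (hTGeq : ∀ v : G, (TG v : E) = T v)
    (S : G →L[ℝ] G) (hST : Function.LeftInverse S TG) (hTS : Function.RightInverse S TG)
    (D lam : ℝ) (hD : 0 < D) (hlam0 : 0 < lam) (hlam1 : lam < 1)
    (hFbound : ∀ v ∈ F, ∀ n : ℕ, ‖(T ^ n) v‖ ≤ D * lam ^ n * ‖v‖)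
    (hGbound : ∀ (v : G) (n : ℕ), ‖((S ^ n) v : E)‖ ≤ D * lam ^ n * ‖(v : E)‖) :
    ∃ J : E →L[ℝ] E,
      (∀ v : E, Summable fun n : ℕ => (T ^ n) (πF v)) ∧
      (∀ v : E, Summable fun n : ℕ => ((S ^ (n + 1)) (⟨πG v, hπGmem v⟩ : G) : E)) ∧
      (∀ v : E, J v =
        -(∑' n : ℕ, (T ^ n) (πF v)) + ∑' n : ℕ, ((S ^ (n + 1)) (⟨πG v, hπGmem v⟩ : G) : E)) ∧
      (∀ v : E, (T - ContinuousLinearMap.id ℝ E) (J v) = v) ∧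
      (∀ v : E, J ((T - ContinuousLinearMap.id ℝ E) v) = v) ∧
      (∃ Teq : E ≃L[ℝ] E, ∀ v : E, Teq v = T v - v) ∧
      ‖J‖ ≤ 2 * max ‖πF‖ ‖πG‖ * D / (1 - lam) := by
  have hgeo : Summable fun n : ℕ => lam ^ n := summable_geometric_of_lt_one hlam0.le hlam1
  have hπFmem : ∀ v : E, πF v ∈ F := fun v => by
    have : πF v ∈ Set.range πF := Set.mem_range_self v
    rwa [hπFr] at this
  have hsum' : ∀ v : E, πF v + πG v = v := fun v => by
    have := congrArg (fun f : E →L[ℝ] E => f v) hsum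
    simpa using this
  have hπG0 : ∀ v ∈ F, πG v = 0 := fun v hv => by
    have : v ∈ {x : E | πG x = 0} := by rw [hπGk]; exact hv
    exact this
  have hπF0 : ∀ v ∈ G, πF v = 0 := fun v hv => by
    have : v ∈ {x : E | πF x = 0} := by rw [hπFk]; exact hv
    exact this
  have hπFid : ∀ v ∈ F, πF v = v := fun v hv => by
    have := hsum' v; rw [hπG0 v hv, add_zero] at this; exact this
  have hπGid : ∀ v ∈ G, πG v = v := fun v hv => by
    have := hsum' v; rw [hπF0 v hv, zero_add] at this; exact this
  have hcommF : ∀ v : E, πF (T v) = T (πF v) := by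
    intro v
    have h1 : T v = T (πF v) + T (πG v) := by rw [← map_add, hsum' v]
    rw [h1, map_add, hπFid _ (hTF _ (hπFmem v)), hπF0 _ (hTG _ (hπGmem v)), add_zero]
  have hcommG : ∀ v : E, πG (T v) = T (πG v) := by
    intro v
    have h1 : T v = T (πF v) + T (πG v) := by rw [← map_add, hsum' v]
    rw [h1, map_add, hπG0 _ (hTF _ (hπFmem v)), hπGid _ (hTG _ (hπGmem v)), zero_add]
  -- summability of the two series
  have hAsum : ∀ v : E, Summable fun n : ℕ => (T ^ n) (πF v) := by
    intro v
    refine Summable.of_norm (Summable.of_nonneg_of_le (fun n => norm_nonneg _)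
      (fun n => hFbound _ (hπFmem v) n) ?_)
    exact (hgeo.mul_left D).mul_right _
  have hBsum0 : ∀ w : G, Summable fun n : ℕ => ((S ^ n) w : E) := by
    intro w
    refine Summable.of_norm (Summable.of_nonneg_of_le (fun n => norm_nonneg _)
      (fun n => hGbound w n) ?_)
    exact (hgeo.mul_left D).mul_right _
  have hBsum : ∀ w : G, Summable fun n : ℕ => ((S ^ (n + 1)) w : E) := by
    intro w
    exact (summable_nat_add_iff 1).2 (hBsum0 w)
  -- the geometric tsum bound
  have hlampos : 0 < 1 - lam := by linarith
  have htsum_bound : ∀ c : ℝ, ∑' n : ℕ, D * lam ^ n * c = D * (1 - lam)⁻¹ * c := by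
    intro c
    have : (fun n : ℕ => D * lam ^ n * c) = fun n : ℕ => (D * c) * lam ^ n := by
      funext n; ring
    rw [this, tsum_mul_left, tsum_geometric_of_lt_one hlam0.le hlam1]; ring
  -- norm bounds on the two sums
  set C := max ‖πF‖ ‖πG‖ with hC
  have hnormA : ∀ v : E, ‖∑' n : ℕ, (T ^ n) (πF v)‖ ≤ D * (1 - lam)⁻¹ * (C * ‖v‖) := by
    intro v
    have h1 : ‖∑' n : ℕ, (T ^ n) (πF v)‖ ≤ ∑' n : ℕ, ‖(T ^ n) (πF v)‖ :=
      norm_tsum_le_tsum_norm (Summable.of_nonneg_of_le (fun n => norm_nonneg _)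
        (fun n => hFbound _ (hπFmem v) n) ((hgeo.mul_left D).mul_right _))
    have h2 : ∑' n : ℕ, ‖(T ^ n) (πF v)‖ ≤ ∑' n : ℕ, D * lam ^ n * ‖πF v‖ := by
      refine Summable.tsum_le_tsum (fun n => hFbound _ (hπFmem v) n)
        (Summable.of_nonneg_of_le (fun n => norm_nonneg _)
          (fun n => hFbound _ (hπFmem v) n) ((hgeo.mul_left D).mul_right _))
        ((hgeo.mul_left D).mul_right _)
    have h3 : ∑' n : ℕ, D * lam ^ n * ‖πF v‖ = D * (1 - lam)⁻¹ * ‖πF v‖ := htsum_bound _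
    have h4 : ‖πF v‖ ≤ C * ‖v‖ := le_trans (πF.le_opNorm v)
      (mul_le_mul_of_nonneg_right (le_max_left _ _) (norm_nonneg v))
    have h5 : 0 ≤ D * (1 - lam)⁻¹ :=
      mul_nonneg hD.le (inv_nonneg.2 hlampos.le)
    calc ‖∑' n : ℕ, (T ^ n) (πF v)‖ ≤ D * (1 - lam)⁻¹ * ‖πF v‖ := by
          rw [← h3]; exact h1.trans h2
      _ ≤ D * (1 - lam)⁻¹ * (C * ‖v‖) := mul_le_mul_of_nonneg_left h4 h5
  have hnormB : ∀ v : E,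
      ‖∑' n : ℕ, ((S ^ (n + 1)) (⟨πG v, hπGmem v⟩ : G) : E)‖ ≤ D * (1 - lam)⁻¹ * (C * ‖v‖) := by
    intro v
    set w : G := (⟨πG v, hπGmem v⟩ : G) with hw
    have hb : ∀ n : ℕ, ‖((S ^ (n + 1)) w : E)‖ ≤ D * lam ^ n * ‖(w : E)‖ := by
      intro n
      refine (hGbound w (n + 1)).trans ?_
      have : lam ^ (n + 1) ≤ lam ^ n :=
        pow_le_pow_of_le_one hlam0.le hlam1.le (Nat.le_succ n)
      have hnn : 0 ≤ ‖(w : E)‖ := norm_nonneg _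
      exact mul_le_mul_of_nonneg_right (mul_le_mul_of_nonneg_left this hD.le) hnn
    have hsummand : Summable fun n : ℕ => D * lam ^ n * ‖(w : E)‖ :=
      (hgeo.mul_left D).mul_right _
    have h1 : ‖∑' n : ℕ, ((S ^ (n + 1)) w : E)‖ ≤ ∑' n : ℕ, ‖((S ^ (n + 1)) w : E)‖ :=
      norm_tsum_le_tsum_norm (Summable.of_nonneg_of_le (fun n => norm_nonneg _) hb hsummand)
    have h2 : ∑' n : ℕ, ‖((S ^ (n + 1)) w : E)‖ ≤ ∑' n : ℕ, D * lam ^ n * ‖(w : E)‖ :=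
      Summable.tsum_le_tsum hb (Summable.of_nonneg_of_le (fun n => norm_nonneg _) hb hsummand) hsummand
    have h3 : ∑' n : ℕ, D * lam ^ n * ‖(w : E)‖ = D * (1 - lam)⁻¹ * ‖(w : E)‖ := htsum_bound _
    have h4 : ‖(w : E)‖ ≤ C * ‖v‖ := by
      show ‖πG v‖ ≤ C * ‖v‖
      exact le_trans (πG.le_opNorm v)
        (mul_le_mul_of_nonneg_right (le_max_right _ _) (norm_nonneg v))
    have h5 : 0 ≤ D * (1 - lam)⁻¹ := mul_nonneg hD.le (inv_nonneg.2 hlampos.le)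
    calc ‖∑' n : ℕ, ((S ^ (n + 1)) w : E)‖ ≤ D * (1 - lam)⁻¹ * ‖(w : E)‖ := by
          rw [← h3]; exact h1.trans h2
      _ ≤ D * (1 - lam)⁻¹ * (C * ‖v‖) := mul_le_mul_of_nonneg_left h4 h5
  -- construct J as a continuous linear map
  have hwadd : ∀ v u : E, (⟨πG (v + u), hπGmem _⟩ : G) = ⟨πG v, hπGmem v⟩ + ⟨πG u, hπGmem u⟩ := by
    intro v u; ext; simp
  have hwsmul : ∀ (c : ℝ) (v : E), (⟨πG (c • v), hπGmem _⟩ : G) = c • ⟨πG v, hπGmem v⟩ := by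
    intro c v; ext; simp
  let Jlin : E →ₗ[ℝ] E :=
    { toFun := fun v => -(∑' n : ℕ, (T ^ n) (πF v)) +
        ∑' n : ℕ, ((S ^ (n + 1)) (⟨πG v, hπGmem v⟩ : G) : E)
      map_add' := by
        intro v u
        have hA : (∑' n : ℕ, (T ^ n) (πF (v + u))) =
            (∑' n : ℕ, (T ^ n) (πF v)) + ∑' n : ℕ, (T ^ n) (πF u) := by
          rw [← Summable.tsum_add (hAsum v) (hAsum u)]
          congr 1; funext n; rw [map_add, map_add]
        have hB : (∑' n : ℕ, ((S ^ (n + 1)) (⟨πG (v + u), hπGmem _⟩ : G) : E)) =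
            (∑' n : ℕ, ((S ^ (n + 1)) (⟨πG v, hπGmem v⟩ : G) : E)) +
              ∑' n : ℕ, ((S ^ (n + 1)) (⟨πG u, hπGmem u⟩ : G) : E) := by
          rw [← Summable.tsum_add (hBsum _) (hBsum _)]
          congr 1; funext n
          rw [hwadd, map_add]; push_cast; ring
        rw [hA, hB]; abel
      map_smul' := by
        intro c v
        have hA : (∑' n : ℕ, (T ^ n) (πF (c • v))) = c • ∑' n : ℕ, (T ^ n) (πF v) := by
          rw [← tsum_const_smul'' c]
          congr 1; funext n; rw [map_smul, map_smul]
        have hB : (∑' n : ℕ, ((S ^ (n + 1)) (⟨πG (c • v), hπGmem _⟩ : G) : E)) =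
            c • ∑' n : ℕ, ((S ^ (n + 1)) (⟨πG v, hπGmem v⟩ : G) : E) := by
          rw [← tsum_const_smul'' c]
          congr 1; funext n
          rw [hwsmul, map_smul]; push_cast; ring_nf
        simp only [RingHom.id_apply]
        rw [hA, hB, smul_add, smul_neg]
      }
  have hJbound : ∀ v : E, ‖Jlin v‖ ≤ 2 * C * D / (1 - lam) * ‖v‖ := by
    intro v
    have h1 : ‖Jlin v‖ ≤ ‖∑' n : ℕ, (T ^ n) (πF v)‖ +
        ‖∑' n : ℕ, ((S ^ (n + 1)) (⟨πG v, hπGmem v⟩ : G) : E)‖ := by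
      refine (norm_add_le _ _).trans ?_
      rw [norm_neg]
    refine h1.trans ?_
    have := add_le_add (hnormA v) (hnormB v)
    refine this.trans (le_of_eq ?_)
    field_simp
    ring
  have hKnonneg : 0 ≤ 2 * C * D / (1 - lam) := by
    have hC0 : 0 ≤ C := le_trans (norm_nonneg πF) (le_max_left _ _)
    positivity
  let J : E →L[ℝ] E := Jlin.mkContinuous _ hJbound
  have hJapp : ∀ v : E, J v = -(∑' n : ℕ, (T ^ n) (πF v)) +
      ∑' n : ℕ, ((S ^ (n + 1)) (⟨πG v, hπGmem v⟩ : G) : E) := fun v => rfl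
  -- right inverse
  have hright : ∀ v : E, (T - ContinuousLinearMap.id ℝ E) (J v) = v := by
    intro v
    set w : G := (⟨πG v, hπGmem v⟩ : G) with hw
    set A := ∑' n : ℕ, (T ^ n) (πF v) with hA
    set B := ∑' n : ℕ, ((S ^ (n + 1)) w : E) with hB
    have hTA : T A = A - πF v := by
      have h1 : T A = ∑' n : ℕ, T ((T ^ n) (πF v)) := T.map_tsum (hAsum v)
      have h2 : (fun n : ℕ => T ((T ^ n) (πF v))) = fun n : ℕ => (T ^ (n + 1)) (πF v) := by
        funext n; rw [pow_succ']; rfl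
      have h3 : A = (T ^ 0) (πF v) + ∑' n : ℕ, (T ^ (n + 1)) (πF v) :=
        Summable.tsum_eq_zero_add (hAsum v)
      rw [h1, h2]
      rw [h3]; simp [pow_zero]
    have hTB : T B = πG v + B := by
      have h1 : T B = ∑' n : ℕ, T ((S ^ (n + 1)) w : E) := T.map_tsum (hBsum w)
      have h2 : (fun n : ℕ => T ((S ^ (n + 1)) w : E)) = fun n : ℕ => ((S ^ n) w : E) := by
        funext n
        have : (S ^ (n + 1)) w = S ((S ^ n) w) := by rw [pow_succ']; rfl
        rw [this, ← hTGeq, hTS ((S ^ n) w)]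
      have h3 : (∑' n : ℕ, ((S ^ n) w : E)) = ((S ^ 0) w : E) + ∑' n : ℕ, ((S ^ (n + 1)) w : E) :=
        Summable.tsum_eq_zero_add (hBsum0 w)
      rw [h1, h2, h3]
      rw [← hB, pow_zero]; rfl
    have : (T - ContinuousLinearMap.id ℝ E) (J v) = T (J v) - J v := by simp
    rw [this, hJapp v, ← hA, ← hB, map_add, map_neg, hTA, hTB]
    have : -(A - πF v) + (πG v + B) - (-A + B) = πF v + πG v := by abel
    rw [this, hsum' v]
  -- injectivity of T - id
  have hinj : ∀ v : E, T v = v → v = 0 := by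
    intro v hv
    have hF1 : T (πF v) = πF v := by rw [← hcommF, hv]
    have hFn : ∀ n : ℕ, (T ^ n) (πF v) = πF v := by
      intro n; induction n with
      | zero => simp
      | succ n ih => rw [pow_succ']; show T ((T ^ n) (πF v)) = πF v; rw [ih, hF1]
    have hπFv : πF v = 0 := by
      have hle : ∀ n : ℕ, ‖πF v‖ ≤ D * lam ^ n * ‖πF v‖ := by
        intro n
        have := hFbound _ (hπFmem v) n
        rwa [hFn n] at this
      have hlim : Filter.Tendsto (fun n : ℕ => D * lam ^ n * ‖πF v‖) Filter.atTop (nhds 0) := by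
        have h0 : Filter.Tendsto (fun n : ℕ => lam ^ n) Filter.atTop (nhds 0) :=
          tendsto_pow_atTop_nhds_zero_of_lt_one hlam0.le hlam1
        have := (h0.const_mul D).mul_const ‖πF v‖
        simpa using this
      have : ‖πF v‖ ≤ 0 :=
        le_of_tendsto_of_tendsto' tendsto_const_nhds hlim hle
      exact norm_le_zero_iff.1 this
    set w : G := (⟨πG v, hπGmem v⟩ : G) with hw
    have hG1 : TG w = w := by
      apply Subtype.ext
      rw [hTGeq]
      show T (πG v) = πG v
      rw [← hcommG, hv]
    have hSw : S w = w := by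
      have h := hST w
      rw [hG1] at h
      exact h
    have hSn : ∀ n : ℕ, (S ^ n) w = w := by
      intro n; induction n with
      | zero => simp
      | succ n ih => rw [pow_succ']; show S ((S ^ n) w) = w; rw [ih, hSw]
    have hπGv : πG v = 0 := by
      have hle : ∀ n : ℕ, ‖πG v‖ ≤ D * lam ^ n * ‖πG v‖ := by
        intro n
        have := hGbound w n
        rw [hSn n] at this
        exact this
      have hlim : Filter.Tendsto (fun n : ℕ => D * lam ^ n * ‖πG v‖) Filter.atTop (nhds 0) := by
        have h0 : Filter.Tendsto (fun n : ℕ => lam ^ n) Filter.atTop (nhds 0) :=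
          tendsto_pow_atTop_nhds_zero_of_lt_one hlam0.le hlam1
        have := (h0.const_mul D).mul_const ‖πG v‖
        simpa using this
      have : ‖πG v‖ ≤ 0 :=
        le_of_tendsto_of_tendsto' tendsto_const_nhds hlim hle
      exact norm_le_zero_iff.1 this
    rw [← hsum' v, hπFv, hπGv, add_zero]
  -- left inverse
  have hleft : ∀ v : E, J ((T - ContinuousLinearMap.id ℝ E) v) = v := by
    intro v
    set u := J ((T - ContinuousLinearMap.id ℝ E) v) with hu
    have h1 : (T - ContinuousLinearMap.id ℝ E) u = (T - ContinuousLinearMap.id ℝ E) v :=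
      hright _
    have h2 : (T - ContinuousLinearMap.id ℝ E) (u - v) = 0 := by
      rw [map_sub, h1, sub_self]
    have h3 : T (u - v) = u - v := by
      have h4 : T (u - v) - (u - v) = 0 := by
        have h5 : (T - ContinuousLinearMap.id ℝ E) (u - v) = T (u - v) - (u - v) := by simp
        rw [h5] at h2; exact h2
      exact sub_eq_zero.1 h4
    exact sub_eq_zero.1 (hinj _ h3)
  -- the equivalence
  have hTeq : ∃ Teq : E ≃L[ℝ] E, ∀ v : E, Teq v = T v - v := by
    refine ⟨ContinuousLinearEquiv.equivOfInverse (T - ContinuousLinearMap.id ℝ E) J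
      hleft hright, ?_⟩
    intro v
    show (T - ContinuousLinearMap.id ℝ E) v = T v - v
    simp
  refine ⟨J, hAsum, fun v => hBsum _, hJapp, hright, hleft, hTeq, ?_⟩
  exact Jlin.mkContinuous_norm_le hKnonneg hJbound
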